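/- The function τ attains its absolute minimum at m_{δ−1} = (δ−1)(pq−1): for every m ∈ ℕ one has τ(m) ≥ τ((δ−1)(pq−1)). -/

import Mathlib

/-- `Δ_j = 1 + 2j − ⌈jp'/p⌉ − ⌈jq'/q⌉ − ⌈j(pq−2)/(pq−1)⌉`, the increment of the τ-function of
the negative definite Seifert manifold `Σ(−2,(p,p'),(q,q'),(pq−1,pq−2)) = −S³₁(T_{p,q})`. -/
def torusDelta (p q p' q' : ℕ) (j : ℕ) : ℤ :=
  1 + 2 * (j : ℤ) - ⌈((j : ℚ) * (p' : ℚ)) / (p : ℚ)⌉ - ⌈((j : ℚ) * (q' : ℚ)) / (q : ℚ)⌉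
    - ⌈((j : ℚ) * ((p : ℚ) * (q : ℚ) - 2)) / ((p : ℚ) * (q : ℚ) - 1)⌉

/-- `τ(m) = Σ_{j=0}^{m−1} Δ_j`. -/
def torusTau (p q p' q' : ℕ) (m : ℕ) : ℤ := ∑ j ∈ Finset.range m, torusDelta p q p' q' j

namespace TorusAux

/-- `(-(j*a')) mod a`, the correction making `⌈j a'/a⌉ = (j a' + r)/a`. -/
def rr (a a' : ℕ) (j : ℤ) : ℤ := (-(j * a')) % a

/-- `f(j) = (j + q·rp(j) + p·rq(j))/(pq)`. -/
def fD (p q p' q' : ℕ) (j : ℤ) : ℤ := (j + q * rr p p' j + p * rr q q' j) / (p * q)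

structure Ctx (p q p' q' : ℕ) : Prop where
  hp : 2 ≤ p
  hpq : p < q
  hp'lt : p' < p
  hq'lt : q' < q
  key : p' * q + p * q' = p * q + 1

variable {p q p' q' : ℕ}

lemma Ctx.hq (h : Ctx p q p' q') : 3 ≤ q := lt_of_le_of_lt h.hp h.hpq
lemma Ctx.pPos (h : Ctx p q p' q') : (0:ℤ) < p := by have := h.hp; exact_mod_cast Nat.lt_of_lt_of_le Nat.zero_lt_two this
lemma Ctx.qPos (h : Ctx p q p' q') : (0:ℤ) < q := by have := h.hq; exact_mod_cast Nat.lt_of_lt_of_le (by norm_num) this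
lemma Ctx.keyZ (h : Ctx p q p' q') : (p' : ℤ) * q + p * q' = p * q + 1 := by exact_mod_cast congrArg (Nat.cast : ℕ → ℤ) h.key

lemma rr_nonneg (a a' : ℕ) (ha : 0 < a) (j : ℤ) : 0 ≤ rr a a' j :=
  Int.emod_nonneg _ (by exact_mod_cast ha.ne')

lemma rr_lt (a a' : ℕ) (ha : 0 < a) (j : ℤ) : rr a a' j < a :=
  Int.emod_lt_of_pos _ (by exact_mod_cast ha)

lemma rr_shift (a a' : ℕ) (j c : ℤ) : rr a a' (j + c * a) = rr a a' j := by
  unfold rr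
  have : -((j + c * a) * a') = -(j * a') + a * (-(c * a')) := by ring
  rw [this, Int.add_mul_emod_self_left]


/-- `p` divides `j + q·rp(j)`. -/
lemma p_dvd (h : Ctx p q p' q') (j : ℤ) : (p:ℤ) ∣ j + q * rr p p' j := by
  have hd : (-(j * p')) % p = -(j * p') - p * ((-(j * p')) / p) := Int.emod_def _ _
  refine ⟨-(j*(q - q')) - q * ((-(j * p')) / p), ?_⟩
  unfold rr
  rw [hd]
  have k := h.keyZ
  linear_combination (-j) * k

lemma q_dvd (h : Ctx p q p' q') (j : ℤ) : (q:ℤ) ∣ j + p * rr q q' j := by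
  have hd : (-(j * q')) % q = -(j * q') - q * ((-(j * q')) / q) := Int.emod_def _ _
  refine ⟨-(j*(p - p')) - p * ((-(j * q')) / q), ?_⟩
  unfold rr
  rw [hd]
  have k := h.keyZ
  linear_combination (-j) * k

lemma num_dvd (h : Ctx p q p' q') (j : ℤ) :
    ((p:ℤ) * q) ∣ j + q * rr p p' j + p * rr q q' j := by
  have hcop : IsCoprime (p:ℤ) (q:ℤ) := by
    rw [Int.isCoprime_iff_gcd_eq_one]
    have h1 : Nat.gcd p q ∣ p' * q + p * q' :=
      dvd_add (Dvd.dvd.mul_left (Nat.gcd_dvd_right p q) _) (Dvd.dvd.mul_right (Nat.gcd_dvd_left p q) _)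
    have h2 : Nat.gcd p q ∣ p * q := Dvd.dvd.mul_right (Nat.gcd_dvd_left p q) _
    rw [h.key] at h1
    have h3 : Nat.gcd p q ∣ 1 := by
      have := Nat.dvd_sub h1 h2; simpa using this
    simpa [Int.gcd_natCast_natCast] using Nat.dvd_one.mp h3
  refine IsCoprime.mul_dvd hcop ?_ ?_
  · exact dvd_add (p_dvd h j) (dvd_mul_right _ _)
  · have := q_dvd h j
    have : (q:ℤ) ∣ (j + p * rr q q' j) + q * rr p p' j := dvd_add this (Dvd.dvd.mul_right dvd_rfl _)
    rw [show j + q * rr p p' j + p * rr q q' j = (j + p * rr q q' j) + q * rr p p' j by ring]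
    exact this

lemma fD_mul (h : Ctx p q p' q') (j : ℤ) :
    (p:ℤ) * q * fD p q p' q' j = j + q * rr p p' j + p * rr q q' j :=
  Int.mul_ediv_cancel' (num_dvd h j)

lemma fD_lb (h : Ctx p q p' q') (j : ℤ) : j ≤ (p:ℤ) * q * fD p q p' q' j := by
  rw [fD_mul h]
  have h1 := rr_nonneg p p' (by have := h.hp; omega : 0 < p) j
  have h2 := rr_nonneg q q' (by have := h.hq; omega : 0 < q) j
  have := h.pPos; have := h.qPos
  nlinarith

lemma fD_ub (h : Ctx p q p' q') (j : ℤ) :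
    (p:ℤ) * q * fD p q p' q' j ≤ j + 2 * (p * q) - p - q := by
  rw [fD_mul h]
  have h1 := rr_lt p p' (by have := h.hp; omega : 0 < p) j
  have h2 := rr_lt q q' (by have := h.hq; omega : 0 < q) j
  have := h.pPos; have := h.qPos
  nlinarith

lemma fD_shift (h : Ctx p q p' q') (j : ℤ) :
    fD p q p' q' (j + p * q) = fD p q p' q' j + 1 := by
  have hpq : ((p:ℤ) * q) ≠ 0 := by have := h.pPos; have := h.qPos; positivity
  apply mul_left_cancel₀ hpq
  rw [mul_add, fD_mul h, fD_mul h]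
  have e1 : rr p p' (j + (p:ℤ) * q) = rr p p' j := by
    have : (j + (p:ℤ)*q) = j + q * p := by ring
    rw [this, rr_shift]
  have e2 : rr q q' (j + (p:ℤ) * q) = rr q q' j := by
    have : (j + (p:ℤ)*q) = j + p * q := by ring
    rw [this, rr_shift]
  rw [e1, e2]; ring

lemma fD_shift_nat (h : Ctx p q p' q') (j : ℤ) (k : ℕ) :
    fD p q p' q' (j + k * (p * q)) = fD p q p' q' j + k := by
  induction k with
  | zero => simp
  | succ n ih =>
      have : j + ((n:ℤ)+1) * (p*q) = (j + n * (p*q)) + p * q := by ring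
      push_cast
      rw [this, fD_shift h, ih]
      ring


lemma rr_self (a a' : ℕ) (ha' : a' < a) : rr a a' (-1) = a' := by
  unfold rr
  norm_num
  exact Int.emod_eq_of_lt (by positivity) (by exact_mod_cast ha')

lemma fD_neg_one (h : Ctx p q p' q') : fD p q p' q' (-1) = 1 := by
  have hpq : ((p:ℤ) * q) ≠ 0 := by have := h.pPos; have := h.qPos; positivity
  apply mul_left_cancel₀ hpq
  rw [fD_mul h, rr_self p p' h.hp'lt, rr_self q q' h.hq'lt]
  have k := h.keyZ
  linarith

lemma fD_N (h : Ctx p q p' q') : fD p q p' q' ((p:ℤ) * q - 1) = 2 := by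
  have : (p:ℤ) * q - 1 = -1 + (1:ℕ) * (p * q) := by push_cast; ring
  rw [this, fD_shift_nat h, fD_neg_one h]; norm_num

/-- ceiling of integer divided by natural, as integer division -/
lemma ceil_div (n : ℤ) (d : ℕ) : ⌈(n:ℚ)/(d:ℚ)⌉ = -((-n) / (d:ℤ)) := by
  have : ((n:ℚ)/(d:ℚ)) = -(((-n : ℤ):ℚ)/((d:ℕ):ℚ)) := by push_cast; ring
  rw [this, Int.ceil_neg, Rat.floor_intCast_div_natCast]

lemma mul_ceil_div (n : ℤ) (d : ℕ) : (d:ℤ) * ⌈(n:ℚ)/(d:ℚ)⌉ = n + (-n) % d := by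
  rw [ceil_div]
  have := Int.emod_def (-n) (d:ℤ)
  linarith [this, mul_neg (d:ℤ) ((-n)/(d:ℤ))]

/-- Closed form for the Delta function. -/
lemma deltaForm (h : Ctx p q p' q') (j : ℕ) :
    torusDelta p q p' q' j = 1 + (j:ℤ) / (↑(p * q - 1)) - fD p q p' q' (j:ℤ) := by
  have hp := h.hp
  have hq := h.hq
  have hpq6 : 6 ≤ p * q := by nlinarith
  have hNZ : ((p * q - 1 : ℕ) : ℤ) = (p:ℤ) * q - 1 := by push_cast [Nat.cast_sub (by omega : 1 ≤ p * q)]; ring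
  have hPQ0 : ((p:ℤ) * q) ≠ 0 := by have := h.pPos; have := h.qPos; positivity
  have hN0 : ((p * q - 1 : ℕ) : ℤ) ≠ 0 := by
    rw [hNZ]
    have h6 : (6:ℤ) ≤ (p:ℤ)*q := by exact_mod_cast hpq6
    omega
  -- first ceiling
  have e1 : ((j : ℚ) * (p' : ℚ)) / (p : ℚ) = (((j * p' : ℤ) : ℚ)) / ((p:ℕ):ℚ) := by push_cast; ring
  have e2 : ((j : ℚ) * (q' : ℚ)) / (q : ℚ) = (((j * q' : ℤ) : ℚ)) / ((q:ℕ):ℚ) := by push_cast; ring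
  have e3 : ((j : ℚ) * ((p : ℚ) * (q : ℚ) - 2)) / ((p : ℚ) * (q : ℚ) - 1)
      = (((j * (((p*q:ℕ):ℤ) - 2) : ℤ) : ℚ)) / ((p*q - 1 : ℕ):ℚ) := by
    have : ((p*q - 1 : ℕ):ℚ) = (p:ℚ) * (q:ℚ) - 1 := by
      push_cast [Nat.cast_sub (by omega : 1 ≤ p * q)]; ring
    rw [this]; push_cast; ring
  rw [torusDelta, e1, e2, e3]
  set c1 := ⌈(((j * p' : ℤ) : ℚ)) / ((p:ℕ):ℚ)⌉ with hc1
  set c2 := ⌈(((j * q' : ℤ) : ℚ)) / ((q:ℕ):ℚ)⌉ with hc2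
  set c3 := ⌈(((j * (((p*q:ℕ):ℤ) - 2) : ℤ) : ℚ)) / ((p*q - 1 : ℕ):ℚ)⌉ with hc3
  have m1 : (p:ℤ) * c1 = j * p' + rr p p' j := by rw [hc1, mul_ceil_div]; rfl
  have m2 : (q:ℤ) * c2 = j * q' + rr q q' j := by rw [hc2, mul_ceil_div]; rfl
  have m3 : c3 = (j:ℤ) - (j:ℤ) / (↑(p * q - 1)) := by
    apply mul_left_cancel₀ hN0
    rw [hc3, mul_ceil_div]
    have hmod : (-((j:ℤ) * (((p*q:ℕ):ℤ) - 2))) % (↑(p * q - 1)) = (j:ℤ) % (↑(p * q - 1)) := by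
      have : -((j:ℤ) * (((p*q:ℕ):ℤ) - 2)) = (j:ℤ) + (↑(p * q - 1)) * (-(j:ℤ)) := by
        rw [hNZ]; push_cast; ring
      rw [this, Int.add_mul_emod_self_left]
    rw [hmod]
    have hdm := Int.emod_def (j:ℤ) (↑(p * q - 1) : ℤ)
    have : ((p*q:ℕ):ℤ) = (↑(p * q - 1) : ℤ) + 1 := by rw [hNZ]; push_cast; ring
    rw [this]
    linarith [hdm]
  have m12 : c1 + c2 = (j:ℤ) + fD p q p' q' j := by
    apply mul_left_cancel₀ hPQ0
    have expand : (p:ℤ) * q * (c1 + c2) = q * ((p:ℤ) * c1) + p * ((q:ℤ) * c2) := by ring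
    rw [expand, m1, m2]
    have k := h.keyZ
    have fm := fD_mul h (j:ℤ)
    linear_combination (j:ℤ) * k - fm
  rw [m3]
  linarith [m12]


/-- periodic extension -/
lemma periodic_iter (g : ℤ → ℤ) (a : ℕ) (hper : ∀ x : ℤ, g (x + a) = g x) :
    ∀ (k : ℕ) (x : ℤ), g (x + k * a) = g x := by
  intro k
  induction k with
  | zero => simp
  | succ n ih =>
      intro x
      have : x + ((n:ℤ)+1) * a = (x + a) + n * a := by ring
      push_cast
      rw [this, ih, hper]

lemma sum_periodic (g : ℤ → ℤ) (a : ℕ) (hper : ∀ x : ℤ, g (x + a) = g x) (k : ℕ) :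
    ∑ j ∈ Finset.range (k * a), g j = k * ∑ j ∈ Finset.range a, g j := by
  induction k with
  | zero => simp
  | succ n ih =>
      have : (n + 1) * a = n * a + a := by ring
      rw [this, Finset.sum_range_add, ih]
      have : ∑ x ∈ Finset.range a, g (↑(n * a + x)) = ∑ x ∈ Finset.range a, g x := by
        apply Finset.sum_congr rfl
        intro x _
        have : ((n * a + x : ℕ) : ℤ) = (x:ℤ) + n * a := by push_cast; ring
        rw [this, periodic_iter g a hper]
      rw [this]
      push_cast
      ring

/-- modular inverse helper -/
lemma inv_emod (a b : ℤ) (m : ℕ) (hm : 0 < m) (hab : (a * b) ≡ 1 [ZMOD (m:ℤ)])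
    (j : ℤ) (h0 : 0 ≤ j) (h1 : j < m) : (-(((-(j * a)) % m) * b)) % m = j := by
  have e1 : ((-(j * a)) % m) ≡ -(j * a) [ZMOD (m:ℤ)] := Int.emod_emod_of_dvd _ dvd_rfl
  have e2 : (-(((-(j * a)) % m) * b)) ≡ (-((-(j * a)) * b)) [ZMOD (m:ℤ)] := (e1.mul_right b).neg
  have e3 : (-((-(j * a)) * b)) = j * (a * b) := by ring
  rw [e3] at e2
  have e4 : j * (a * b) ≡ j * 1 [ZMOD (m:ℤ)] := hab.mul_left j
  have e5 := e2.trans e4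
  rw [mul_one] at e5
  have := e5.eq  -- not right; use definition
  calc (-(((-(j * a)) % m) * b)) % m = j % m := e5
    _ = j := Int.emod_eq_of_lt h0 h1

/-- sum of rr over one period equals sum of indices -/
lemma sum_rr_period (h : Ctx p q p' q') :
    ∑ j ∈ Finset.range p, rr p p' (j:ℤ) = ∑ j ∈ Finset.range p, (j:ℤ) := by
  have hp0 : 0 < p := by have := h.hp; omega
  have hp'q : ((p':ℤ) * q) ≡ 1 [ZMOD (p:ℤ)] := by
    rw [Int.modEq_iff_dvd]
    refine ⟨(q':ℤ) - q, ?_⟩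
    have k := h.keyZ
    linear_combination -k
  have hqp' : ((q:ℤ) * p') ≡ 1 [ZMOD (p:ℤ)] := by rwa [mul_comm]
  apply Finset.sum_nbij' (i := fun j : ℕ => (rr p p' (j:ℤ)).toNat)
    (j := fun k : ℕ => ((-((k:ℤ) * q)) % p).toNat)
  · intro a ha
    rw [Finset.mem_range] at *
    have h1 := rr_lt p p' hp0 (a:ℤ)
    have h2 := rr_nonneg p p' hp0 (a:ℤ)
    omega
  · intro a ha
    rw [Finset.mem_range] at *
    have h1 : (-((a:ℤ) * q)) % p < p := Int.emod_lt_of_pos _ (by exact_mod_cast hp0)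
    have h2 : 0 ≤ (-((a:ℤ) * q)) % p := Int.emod_nonneg _ (by exact_mod_cast hp0.ne')
    omega
  · intro a ha
    rw [Finset.mem_range] at ha
    have h2 := rr_nonneg p p' hp0 (a:ℤ)
    have key := inv_emod (p':ℤ) (q:ℤ) p hp0 hp'q (a:ℤ) (by positivity) (by exact_mod_cast ha)
    have : ((rr p p' (a:ℤ)).toNat : ℤ) = rr p p' (a:ℤ) := Int.toNat_of_nonneg h2
    rw [show (((rr p p' (a:ℤ)).toNat : ℕ) : ℤ) = rr p p' (a:ℤ) from this]
    unfold rr at key ⊢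
    omega
  · intro a ha
    rw [Finset.mem_range] at ha
    have h2 : 0 ≤ (-((a:ℤ) * q)) % p := Int.emod_nonneg _ (by exact_mod_cast hp0.ne')
    have key := inv_emod (q:ℤ) (p':ℤ) p hp0 hqp' (a:ℤ) (by positivity) (by exact_mod_cast ha)
    unfold rr
    rw [show ((((-((a:ℤ) * q)) % p).toNat : ℕ) : ℤ) = (-((a:ℤ) * q)) % p from Int.toNat_of_nonneg h2]
    omega
  · intro a ha
    have h2 := rr_nonneg p p' hp0 (a:ℤ)
    exact (Int.toNat_of_nonneg h2).symm

lemma sum_rr_period_q (h : Ctx p q p' q') :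
    ∑ j ∈ Finset.range q, rr q q' (j:ℤ) = ∑ j ∈ Finset.range q, (j:ℤ) := by
  have hq0 : 0 < q := by have := h.hq; omega
  have hq'p : ((q':ℤ) * p) ≡ 1 [ZMOD (q:ℤ)] := by
    rw [Int.modEq_iff_dvd]
    refine ⟨(p':ℤ) - p, ?_⟩
    have k := h.keyZ
    linear_combination -k
  have hpq' : ((p:ℤ) * q') ≡ 1 [ZMOD (q:ℤ)] := by rwa [mul_comm]
  apply Finset.sum_nbij' (i := fun j : ℕ => (rr q q' (j:ℤ)).toNat)
    (j := fun k : ℕ => ((-((k:ℤ) * p)) % q).toNat)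
  · intro a ha
    rw [Finset.mem_range] at *
    have h1 := rr_lt q q' hq0 (a:ℤ)
    have h2 := rr_nonneg q q' hq0 (a:ℤ)
    omega
  · intro a ha
    rw [Finset.mem_range] at *
    have h1 : (-((a:ℤ) * p)) % q < q := Int.emod_lt_of_pos _ (by exact_mod_cast hq0)
    have h2 : 0 ≤ (-((a:ℤ) * p)) % q := Int.emod_nonneg _ (by exact_mod_cast hq0.ne')
    omega
  · intro a ha
    rw [Finset.mem_range] at ha
    have h2 := rr_nonneg q q' hq0 (a:ℤ)
    have key := inv_emod (q':ℤ) (p:ℤ) q hq0 hq'p (a:ℤ) (by positivity) (by exact_mod_cast ha)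
    have : ((rr q q' (a:ℤ)).toNat : ℤ) = rr q q' (a:ℤ) := Int.toNat_of_nonneg h2
    rw [show (((rr q q' (a:ℤ)).toNat : ℕ) : ℤ) = rr q q' (a:ℤ) from this]
    unfold rr at key ⊢
    omega
  · intro a ha
    rw [Finset.mem_range] at ha
    have h2 : 0 ≤ (-((a:ℤ) * p)) % q := Int.emod_nonneg _ (by exact_mod_cast hq0.ne')
    have key := inv_emod (p:ℤ) (q':ℤ) q hq0 hpq' (a:ℤ) (by positivity) (by exact_mod_cast ha)
    unfold rr
    rw [show ((((-((a:ℤ) * p)) % q).toNat : ℕ) : ℤ) = (-((a:ℤ) * p)) % q from Int.toNat_of_nonneg h2]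
    omega
  · intro a ha
    have h2 := rr_nonneg q q' hq0 (a:ℤ)
    exact (Int.toNat_of_nonneg h2).symm


lemma gauss (n : ℕ) (hn : 1 ≤ n) : (∑ j ∈ Finset.range n, (j:ℤ)) * 2 = n * (n - 1) := by
  have h1 : ((∑ i ∈ Finset.range n, i) * 2 : ℕ) = n * (n - 1) := Finset.sum_range_id_mul_two n
  have h2 := congrArg (Nat.cast : ℕ → ℤ) h1
  push_cast [Nat.cast_sub hn] at h2
  exact_mod_cast h2

lemma sum_fD_pq (h : Ctx p q p' q') (δ : ℕ) (hδZ : 2*(δ:ℤ) = ((p:ℤ)-1)*((q:ℤ)-1)) :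
    ∑ j ∈ Finset.range (p*q), fD p q p' q' (j:ℤ) = (p:ℤ)*q + δ - 1 := by
  have hp0 : 0 < p := by have := h.hp; omega
  have hq0 : 0 < q := by have := h.hq; omega
  set S := ∑ j ∈ Finset.range (p*q), fD p q p' q' (j:ℤ) with hS
  set X := ∑ j ∈ Finset.range (p*q), ((j:ℕ):ℤ) with hX
  set Rp := ∑ j ∈ Finset.range (p*q), rr p p' ((j:ℕ):ℤ) with hRp0
  set Rq := ∑ j ∈ Finset.range (p*q), rr q q' ((j:ℕ):ℤ) with hRq0
  set A := ∑ j ∈ Finset.range p, ((j:ℕ):ℤ) with hA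
  set B := ∑ j ∈ Finset.range q, ((j:ℕ):ℤ) with hB
  have hs : (p:ℤ)*q * S = X + (q:ℤ) * Rp + (p:ℤ) * Rq := by
    rw [hS, Finset.mul_sum]
    rw [show ∑ j ∈ Finset.range (p*q), (p:ℤ)*q * fD p q p' q' (j:ℤ)
        = ∑ j ∈ Finset.range (p*q), (((j:ℕ):ℤ) + q * rr p p' j + p * rr q q' j) from
      Finset.sum_congr rfl (fun j _ => fD_mul h j)]
    rw [Finset.sum_add_distrib, Finset.sum_add_distrib, hX, ← Finset.mul_sum, ← Finset.mul_sum]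
  have hRp : Rp = (q:ℤ) * A := by
    rw [hRp0, show p*q = q*p from mul_comm p q,
      sum_periodic (rr p p') p (fun x => by simpa using rr_shift p p' x 1) q,
      sum_rr_period h, hA]
  have hRq : Rq = (p:ℤ) * B := by
    rw [hRq0, sum_periodic (rr q q') q (fun x => by simpa using rr_shift q q' x 1) p,
      sum_rr_period_q h, hB]
  have gp : A * 2 = (p:ℤ) * ((p:ℤ) - 1) := by
    have := gauss p hp0
    rw [hA]; push_cast at this ⊢; linarith
  have gq : B * 2 = (q:ℤ) * ((q:ℤ) - 1) := by
    have := gauss q hq0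
    rw [hB]; push_cast at this ⊢; linarith
  have gx : X * 2 = ((p:ℤ)*q) * ((p:ℤ)*q - 1) := by
    have := gauss (p*q) (Nat.mul_pos hp0 hq0)
    rw [hX]; push_cast at this ⊢; linarith
  have h2pq : (2*((p:ℤ)*q)) ≠ 0 := by
    have := h.pPos; have := h.qPos; positivity
  apply mul_left_cancel₀ h2pq
  linear_combination 2*hs + gx + (q:ℤ)*(q:ℤ)*gp + (p:ℤ)*(p:ℤ)*gq
    + 2*(q:ℤ)*hRp + 2*(p:ℤ)*hRq - (p:ℤ)*(q:ℤ)*hδZ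

lemma sum_fD_N (h : Ctx p q p' q') (δ : ℕ) (hδZ : 2*(δ:ℤ) = ((p:ℤ)-1)*((q:ℤ)-1)) :
    ∑ j ∈ Finset.range (p*q - 1), fD p q p' q' (j:ℤ) = (p:ℤ)*q + δ - 3 := by
  have hp0 : 0 < p := by have := h.hp; omega
  have hq0 : 0 < q := by have := h.hq; omega
  have h1 : p*q = (p*q - 1) + 1 := by
    have : 1 ≤ p*q := Nat.mul_pos hp0 hq0
    omega
  have h2 := sum_fD_pq h δ hδZ
  rw [h1, Finset.sum_range_succ] at h2
  have h3 : ((p*q - 1 : ℕ):ℤ) = (p:ℤ)*q - 1 := by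
    have : 1 ≤ p*q := Nat.mul_pos hp0 hq0
    push_cast [Nat.cast_sub this]; ring
  rw [h3, fD_N h] at h2
  linarith


/-- window sum shifted by N -/
lemma SG_shift (h : Ctx p q p' q') (t : ℤ) :
    (∑ k ∈ Finset.range (p*q-1), fD p q p' q' ((t + ((p:ℤ)*q - 1)) + k))
      = (∑ k ∈ Finset.range (p*q-1), fD p q p' q' (t + k)) + ((p*q - 1 : ℕ) : ℤ)
        + fD p q p' q' (t-1) - fD p q p' q' (t + ((p:ℤ)*q - 1) - 1) := by
  have hp0 : 0 < p := by have := h.hp; omega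
  have hq0 : 0 < q := by have := h.hq; omega
  have hpq6 : 6 ≤ p * q := by have := h.hp; have := h.hq; nlinarith
  have hN2 : p*q - 1 = (p*q - 2) + 1 := by omega
  have lhs1 : (∑ k ∈ Finset.range (p*q-1), fD p q p' q' ((t + ((p:ℤ)*q - 1)) + k))
      = (∑ k ∈ Finset.range (p*q-1), (fD p q p' q' ((t - 1) + k) + 1)) := by
    apply Finset.sum_congr rfl
    intro k _
    have e : (t + ((p:ℤ)*q - 1)) + k = ((t - 1) + k) + (p:ℤ)*q := by ring
    rw [e, fD_shift h]
  have lhs2 : (∑ k ∈ Finset.range (p*q-1), (fD p q p' q' ((t - 1) + k) + 1))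
      = (∑ k ∈ Finset.range (p*q-1), fD p q p' q' ((t - 1) + k)) + ((p*q - 1 : ℕ) : ℤ) := by
    rw [Finset.sum_add_distrib]
    simp
  have A1 : (∑ k ∈ Finset.range (p*q-1), fD p q p' q' ((t - 1) + k))
      = (∑ k ∈ Finset.range (p*q-2), fD p q p' q' (t + k)) + fD p q p' q' (t-1) := by
    rw [hN2, Finset.sum_range_succ']
    congr 1
    · apply Finset.sum_congr rfl
      intro k _
      congr 1
      push_cast
      ring
    · norm_num
  have A2 : (∑ k ∈ Finset.range (p*q-1), fD p q p' q' (t + k))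
      = (∑ k ∈ Finset.range (p*q-2), fD p q p' q' (t + k)) + fD p q p' q' (t + ((p:ℤ)*q - 1) - 1) := by
    rw [hN2, Finset.sum_range_succ]
    congr 2
    have : ((p*q - 2 : ℕ) : ℤ) = (p:ℤ)*q - 2 := by push_cast [Nat.cast_sub (by omega : 2 ≤ p*q)]; ring
    rw [this]
    ring
  rw [lhs1, lhs2, A1]
  rw [A2]
  ring

/-- closed form for the window sum at multiples of N -/
lemma SG_form (h : Ctx p q p' q') (δ : ℕ) (hδZ : 2*(δ:ℤ) = ((p:ℤ)-1)*((q:ℤ)-1)) (i : ℕ) :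
    (∑ k ∈ Finset.range (p*q-1), fD p q p' q' (((i*(p*q-1) : ℕ) : ℤ) + k))
      = ((i:ℤ)+1) * ((p*q - 1 : ℕ) : ℤ) - fD p q p' q' (((i*(p*q-1) : ℕ) : ℤ) - 1) + δ - 1 := by
  have hp0 : 0 < p := by have := h.hp; omega
  have hq0 : 0 < q := by have := h.hq; omega
  have hpq6 : 6 ≤ p * q := by have := h.hp; have := h.hq; nlinarith
  have hNZ : ((p * q - 1 : ℕ) : ℤ) = (p:ℤ) * q - 1 := by
    push_cast [Nat.cast_sub (by omega : 1 ≤ p * q)]; ring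
  induction i with
  | zero =>
      simp only [Nat.zero_mul, Nat.cast_zero, zero_add]
      rw [show ((0:ℤ) - 1) = -1 by ring, sum_fD_N h δ hδZ, fD_neg_one h, hNZ]
      ring
  | succ n ih =>
      have cast1 : (((n+1)*(p*q-1) : ℕ) : ℤ) = ((n*(p*q-1) : ℕ) : ℤ) + ((p:ℤ)*q - 1) := by
        push_cast [Nat.cast_sub (by omega : 1 ≤ p * q)]
        ring
      have e : (∑ k ∈ Finset.range (p*q-1), fD p q p' q' ((((n+1)*(p*q-1) : ℕ) : ℤ) + k))
          = ∑ k ∈ Finset.range (p*q-1), fD p q p' q' (((((n*(p*q-1) : ℕ) : ℤ)) + ((p:ℤ)*q - 1)) + k) := by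
        apply Finset.sum_congr rfl; intro k _; rw [cast1]
      rw [e, SG_shift h, ih, cast1]
      push_cast
      ring

/-- the Delta sum over block i -/
lemma blockDelta (h : Ctx p q p' q') (δ : ℕ) (hδZ : 2*(δ:ℤ) = ((p:ℤ)-1)*((q:ℤ)-1)) (i : ℕ) :
    (∑ j ∈ Finset.Ico (i*(p*q-1)) ((i+1)*(p*q-1)), torusDelta p q p' q' j)
      = fD p q p' q' (((i*(p*q-1) : ℕ) : ℤ) - 1) - δ + 1 := by
  have hp0 : 0 < p := by have := h.hp; omega
  have hq0 : 0 < q := by have := h.hq; omega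
  have hpq6 : 6 ≤ p * q := by have := h.hp; have := h.hq; nlinarith
  have hlen : (i+1)*(p*q-1) - i*(p*q-1) = p*q-1 := by
    have e : (i+1)*(p*q-1) = i*(p*q-1) + (p*q-1) := by ring
    omega
  rw [Finset.sum_Ico_eq_sum_range, hlen]
  have term : ∀ k ∈ Finset.range (p*q-1),
      torusDelta p q p' q' (i*(p*q-1) + k)
        = (1 + (i:ℤ)) - fD p q p' q' (((i*(p*q-1) : ℕ) : ℤ) + k) := by
    intro k hk
    rw [Finset.mem_range] at hk
    rw [deltaForm h]
    have hdiv : (i*(p*q-1) + k) / (p*q-1) = i := by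
      have e : i*(p*q-1) + k = k + (p*q-1)*i := by ring
      rw [e, Nat.add_mul_div_left _ _ (by omega : 0 < p*q-1), Nat.div_eq_of_lt hk]
      omega
    have : ((i*(p*q-1) + k : ℕ) : ℤ) / ((p*q-1 : ℕ) : ℤ) = (i:ℤ) := by
      rw [← Int.natCast_div, hdiv]
    push_cast at this ⊢
    rw [this]
    try ring
  rw [Finset.sum_congr rfl term, Finset.sum_sub_distrib, SG_form h δ hδZ]
  simp [Finset.sum_const, Finset.card_range]
  push_cast
  ring


/-- upper bound on fD at block boundary minus one -/
lemma sign_le (h : Ctx p q p' q') (i : ℕ) :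
    fD p q p' q' (((i*(p*q-1) : ℕ) : ℤ) - 1) ≤ (i:ℤ) + 1 := by
  have hp0 : 0 < p := by have := h.hp; omega
  have hq0 : 0 < q := by have := h.hq; omega
  have hpq6 : 6 ≤ p * q := by have := h.hp; have := h.hq; nlinarith
  have hNZ : ((p * q - 1 : ℕ) : ℤ) = (p:ℤ) * q - 1 := by
    push_cast [Nat.cast_sub (by omega : 1 ≤ p * q)]; ring
  have e : ((i*(p*q-1) : ℕ) : ℤ) - 1 = (-((i:ℤ)+1)) + (i:ℕ) * ((p:ℤ)*q) := by
    push_cast [Nat.cast_sub (by omega : 1 ≤ p * q)]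
    ring
  rw [e, fD_shift_nat h]
  have hub := fD_ub h (-((i:ℤ)+1))
  have hP := h.pPos; have hQ := h.qPos
  have hi : (0:ℤ) ≤ (i:ℤ) := by positivity
  have h1 : fD p q p' q' (-((i:ℤ)+1)) ≤ 1 := by
    by_contra hcon
    push_neg at hcon
    have h2 : (2:ℤ) ≤ fD p q p' q' (-((i:ℤ)+1)) := hcon
    nlinarith
  linarith

/-- lower bound on fD at block boundary minus one -/
lemma sign_ge (h : Ctx p q p' q') (δ : ℕ) (hδlt : (δ:ℤ) < (p:ℤ)*q) (i : ℕ)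
    (hi : (δ:ℤ) ≤ (i:ℤ) + 1) :
    (δ:ℤ) - 1 ≤ fD p q p' q' (((i*(p*q-1) : ℕ) : ℤ) - 1) := by
  have hp0 : 0 < p := by have := h.hp; omega
  have hq0 : 0 < q := by have := h.hq; omega
  have hpq6 : 6 ≤ p * q := by have := h.hp; have := h.hq; nlinarith
  have hpq6Z : (6:ℤ) ≤ (p:ℤ)*q := by exact_mod_cast hpq6
  have hNZ : ((i*(p*q-1) : ℕ) : ℤ) = (i:ℤ) * ((p:ℤ)*q - 1) := by
    push_cast [Nat.cast_sub (by omega : 1 ≤ p * q)]; ring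
  have hlb := fD_lb h (((i*(p*q-1) : ℕ) : ℤ) - 1)
  rw [hNZ] at hlb ⊢
  by_contra hcon
  push_neg at hcon
  have h2 : fD p q p' q' ((i:ℤ) * ((p:ℤ)*q - 1) - 1) ≤ (δ:ℤ) - 2 := by linarith
  have h3 : (p:ℤ)*q*(fD p q p' q' ((i:ℤ) * ((p:ℤ)*q - 1) - 1)) ≤ (p:ℤ)*q*((δ:ℤ)-2) := by
    nlinarith
  nlinarith

/-- tau accumulates deltas -/
lemma tau_add_block (a b : ℕ) (hab : a ≤ b) :
    torusTau p q p' q' b = torusTau p q p' q' a + ∑ j ∈ Finset.Ico a b, torusDelta p q p' q' j := by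
  simp only [torusTau, Finset.range_eq_Ico]
  rw [← Finset.sum_Ico_consecutive _ (Nat.zero_le a) hab]


lemma mono_up (a : ℕ) (k : ℕ)
    (hpos : ∀ j, a ≤ j → j < a + k → 0 ≤ torusDelta p q p' q' j) :
    torusTau p q p' q' a ≤ torusTau p q p' q' (a + k) := by
  induction k with
  | zero => simp
  | succ n ih =>
      have h1 : torusTau p q p' q' (a + (n+1)) = torusTau p q p' q' (a + n) + torusDelta p q p' q' (a+n) := by
        rw [show a + (n+1) = (a+n) + 1 from rfl, torusTau, Finset.sum_range_succ]; rfl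
      have h2 := ih (fun j hj hj2 => hpos j hj (by omega))
      have h3 := hpos (a+n) (by omega) (by omega)
      omega

lemma mono_down (a : ℕ) (k : ℕ)
    (hneg : ∀ j, a ≤ j → j < a + k → torusDelta p q p' q' j ≤ 0) :
    torusTau p q p' q' (a + k) ≤ torusTau p q p' q' a := by
  induction k with
  | zero => simp
  | succ n ih =>
      have h1 : torusTau p q p' q' (a + (n+1)) = torusTau p q p' q' (a + n) + torusDelta p q p' q' (a+n) := by
        rw [show a + (n+1) = (a+n) + 1 from rfl, torusTau, Finset.sum_range_succ]; rfl
      have h2 := ih (fun j hj hj2 => hneg j hj (by omega))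
      have h3 := hneg (a+n) (by omega) (by omega)
      omega

/-- Delta is nonnegative early in a block -/
lemma delta_nonneg (h : Ctx p q p' q') (j : ℕ)
    (hj : (j:ℤ) < ((j/(p*q-1) : ℕ) : ℤ) * ((p:ℤ)*q) + p + q) :
    0 ≤ torusDelta p q p' q' j := by
  rw [deltaForm h]
  have hdivc : ((j:ℕ):ℤ) / ((p*q-1:ℕ):ℤ) = ((j/(p*q-1) : ℕ) : ℤ) := by
    rw [← Int.natCast_div]
  rw [hdivc]
  by_contra hcon
  push_neg at hcon
  have h2 : ((j/(p*q-1) : ℕ) : ℤ) + 2 ≤ fD p q p' q' (j:ℤ) := by omega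
  have hub := fD_ub h (j:ℤ)
  have hP := h.pPos; have hQ := h.qPos
  have h3 : (p:ℤ)*q*(((j/(p*q-1) : ℕ) : ℤ) + 2) ≤ (p:ℤ)*q*(fD p q p' q' (j:ℤ)) := by
    apply mul_le_mul_of_nonneg_left h2
    positivity
  nlinarith

/-- Delta is nonpositive late in a block -/
lemma delta_nonpos (h : Ctx p q p' q') (j : ℕ)
    (hj : ((j/(p*q-1) : ℕ) : ℤ) * ((p:ℤ)*q) < (j:ℤ)) :
    torusDelta p q p' q' j ≤ 0 := by
  rw [deltaForm h]
  have hdivc : ((j:ℕ):ℤ) / ((p*q-1:ℕ):ℤ) = ((j/(p*q-1) : ℕ) : ℤ) := by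
    rw [← Int.natCast_div]
  rw [hdivc]
  by_contra hcon
  push_neg at hcon
  have h2 : fD p q p' q' (j:ℤ) ≤ ((j/(p*q-1) : ℕ) : ℤ) := by omega
  have hlb := fD_lb h (j:ℤ)
  have hP := h.pPos; have hQ := h.qPos
  have h3 : (p:ℤ)*q*(fD p q p' q' (j:ℤ)) ≤ (p:ℤ)*q*((j/(p*q-1) : ℕ) : ℤ) := by
    apply mul_le_mul_of_nonneg_left h2
    positivity
  nlinarith

end TorusAux

/-- `τ` attains its absolute minimum at `m_{δ−1} = (δ−1)(pq−1)`. -/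
theorem torusTau_min (p q : ℕ) (hp : 2 ≤ p) (hpq : p < q) (hcop : Nat.Coprime p q)
    (δ : ℕ) (hδ : 2 * δ = (p - 1) * (q - 1))
    (p' : ℕ) (hp'pos : 0 < p') (hp'lt : p' < p) (hp' : p' * q ≡ 1 [MOD p])
    (q' : ℕ) (hq'pos : 0 < q') (hq'lt : q' < q) (hq' : p * q' ≡ 1 [MOD q]) :
    ∀ m : ℕ, torusTau p q p' q' ((δ - 1) * (p * q - 1)) ≤ torusTau p q p' q' m := by
  intro m
  have hq3 : 3 ≤ q := by omega
  have hpq6 : 6 ≤ p*q := by nlinarith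
  have hN0 : 0 < p*q - 1 := by omega
  -- key identity p'q + pq' = pq + 1
  have key : p' * q + p * q' = p * q + 1 := by
    have hs1 : 1 ≤ p' * q + p * q' := by nlinarith
    have h1 : p ∣ p' * q + p * q' - 1 := by
      have e2 : p' * q + p * q' ≡ 1 + 0 [MOD p] :=
        Nat.ModEq.add hp' ((Nat.modEq_zero_iff_dvd).mpr ⟨q', rfl⟩)
      have e3 : p' * q + p * q' ≡ 1 [MOD p] := by simpa using e2
      exact (Nat.modEq_iff_dvd' hs1).mp e3.symm
    have h2 : q ∣ p' * q + p * q' - 1 := by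
      have e2 : p' * q + p * q' ≡ 0 + 1 [MOD q] :=
        Nat.ModEq.add ((Nat.modEq_zero_iff_dvd).mpr ⟨p', by ring⟩) hq'
      have e3 : p' * q + p * q' ≡ 1 [MOD q] := by simpa using e2
      exact (Nat.modEq_iff_dvd' hs1).mp e3.symm
    have h3 : p*q ∣ p' * q + p * q' - 1 := Nat.Coprime.mul_dvd_of_dvd_of_dvd hcop h1 h2
    obtain ⟨k, hk⟩ := h3
    have hb1 : p' * q + p * q' - 1 < 2*(p*q) := by
      have b1 : p' * q ≤ (p-1) * q := Nat.mul_le_mul_right q (by omega)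
      have b2 : p * q' ≤ p * (q-1) := Nat.mul_le_mul_left p (by omega)
      have b4 : (p-1)*q ≤ p*q := Nat.mul_le_mul_right q (by omega)
      have b5 : p*(q-1) < p*q := by
        apply mul_lt_mul_of_pos_left (by omega : q-1 < q) (by omega : 0 < p)
      omega
    have hb2 : 4 ≤ p' * q + p * q' - 1 := by
      have c1 : q ≤ p' * q := Nat.le_mul_of_pos_left q hp'pos
      have c2 : p ≤ p * q' := Nat.le_mul_of_pos_right p hq'pos
      omega
    have hk1 : k = 1 := by
      have hklt : k < 2 := by
        by_contra hcon
        push_neg at hcon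
        have : p*q*2 ≤ p*q*k := Nat.mul_le_mul_left (p*q) hcon
        omega
      have hk0 : k ≠ 0 := by
        intro h0
        rw [h0, Nat.mul_zero] at hk
        omega
      omega
    rw [hk1, Nat.mul_one] at hk
    omega
  have hC : TorusAux.Ctx p q p' q' := ⟨hp, hpq, hp'lt, hq'lt, key⟩
  have hδZ : 2*(δ:ℤ) = ((p:ℤ)-1)*((q:ℤ)-1) := by
    have hc := congrArg (Nat.cast : ℕ → ℤ) hδ
    push_cast [Nat.cast_sub (by omega : 1 ≤ p), Nat.cast_sub (by omega : 1 ≤ q)] at hc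
    linarith
  have hδ1 : 1 ≤ δ := by nlinarith
  have hδlt : δ < p*q := by nlinarith
  -- endpoint minimality among multiples of N
  have stepUp : ∀ i : ℕ, δ ≤ i + 1 →
      torusTau p q p' q' (i*(p*q-1)) ≤ torusTau p q p' q' ((i+1)*(p*q-1)) := by
    intro i hi
    have hb := TorusAux.blockDelta hC δ hδZ i
    have hs := TorusAux.tau_add_block (p:=p) (q:=q) (p':=p') (q':=q') (i*(p*q-1)) ((i+1)*(p*q-1))
      (Nat.mul_le_mul_right _ (by omega))
    have hg := TorusAux.sign_ge hC δ (by exact_mod_cast hδlt) i (by exact_mod_cast hi)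
    rw [hs, hb]
    linarith
  have stepDown : ∀ i : ℕ, i + 2 ≤ δ →
      torusTau p q p' q' ((i+1)*(p*q-1)) ≤ torusTau p q p' q' (i*(p*q-1)) := by
    intro i hi
    have hb := TorusAux.blockDelta hC δ hδZ i
    have hs := TorusAux.tau_add_block (p:=p) (q:=q) (p':=p') (q':=q') (i*(p*q-1)) ((i+1)*(p*q-1))
      (Nat.mul_le_mul_right _ (by omega))
    have hl := TorusAux.sign_le hC i
    have hiZ : ((i:ℤ)+2) ≤ (δ:ℤ) := by exact_mod_cast hi
    rw [hs, hb]
    linarith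
  have upChain : ∀ k : ℕ,
      torusTau p q p' q' ((δ-1)*(p*q-1)) ≤ torusTau p q p' q' ((δ-1+k)*(p*q-1)) := by
    intro k
    induction k with
    | zero => simp
    | succ n ih =>
        have hst := stepUp (δ-1+n) (by omega)
        have e : δ-1+n+1 = δ-1+(n+1) := by omega
        rw [e] at hst
        exact le_trans ih hst
  have downChain : ∀ k : ℕ, k ≤ δ - 1 →
      torusTau p q p' q' ((δ-1)*(p*q-1)) ≤ torusTau p q p' q' ((δ-1-k)*(p*q-1)) := by
    intro k
    induction k with
    | zero => intro _; simp
    | succ n ih =>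
        intro hk
        have ihh := ih (by omega)
        have hst := stepDown (δ-1-(n+1)) (by omega)
        have e : δ-1-(n+1)+1 = δ-1-n := by omega
        rw [e] at hst
        exact le_trans ihh hst
  have endpoint : ∀ i : ℕ,
      torusTau p q p' q' ((δ-1)*(p*q-1)) ≤ torusTau p q p' q' (i*(p*q-1)) := by
    intro i
    rcases le_or_gt (δ-1) i with hle | hlt
    · have := upChain (i - (δ-1))
      rwa [show δ-1+(i-(δ-1)) = i by omega] at this
    · have := downChain ((δ-1) - i) (by omega)
      rwa [show δ-1-((δ-1)-i) = i by omega] at this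
  -- within the block containing m
  have hlow : (m/(p*q-1))*(p*q-1) ≤ m := Nat.div_mul_le_self m (p*q-1)
  have hhigh : m < (m/(p*q-1)+1)*(p*q-1) := by
    have h1 := Nat.div_add_mod m (p*q-1)
    have h2 : m % (p*q-1) < p*q-1 := Nat.mod_lt _ hN0
    have e : (m/(p*q-1)+1)*(p*q-1) = (p*q-1)*(m/(p*q-1)) + (p*q-1) := by ring
    rw [e]
    linarith
  have hdivj : ∀ j, (m/(p*q-1))*(p*q-1) ≤ j → j < (m/(p*q-1)+1)*(p*q-1) →
      j / (p*q-1) = m/(p*q-1) := by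
    intro j h1 h2
    exact Nat.div_eq_of_lt_le h1 h2
  rcases le_or_gt m (min ((m/(p*q-1))*(p*q) + 1) ((m/(p*q-1)+1)*(p*q-1))) with hmc | hcm
  · -- rising part of the block
    have hup := TorusAux.mono_up (p:=p) (q:=q) (p':=p') (q':=q')
      ((m/(p*q-1))*(p*q-1)) (m - (m/(p*q-1))*(p*q-1)) ?_
    · rw [show (m/(p*q-1))*(p*q-1) + (m - (m/(p*q-1))*(p*q-1)) = m by omega] at hup
      exact le_trans (endpoint (m/(p*q-1))) hup
    · intro j hj1 hj2
      have hjm : j < m := by omega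
      have hjlt : j < (m/(p*q-1)+1)*(p*q-1) :=
        lt_of_lt_of_le hjm (le_trans hmc (min_le_right _ _))
      have hjc : j < (m/(p*q-1))*(p*q) + 1 :=
        lt_of_lt_of_le hjm (le_trans hmc (min_le_left _ _))
      have hdiv := hdivj j hj1 hjlt
      apply TorusAux.delta_nonneg hC
      rw [hdiv]
      have hjle : j ≤ (m/(p*q-1))*(p*q) := by omega
      have hjleZ : (j:ℤ) ≤ ((m/(p*q-1) : ℕ):ℤ) * ((p:ℤ)*q) := by exact_mod_cast hjle
      have hPos : (0:ℤ) < (p:ℤ) + q := by positivity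
      linarith
  · -- falling part of the block
    have hc2 : min ((m/(p*q-1))*(p*q) + 1) ((m/(p*q-1)+1)*(p*q-1)) = (m/(p*q-1))*(p*q) + 1 := by
      rcases Nat.le_total ((m/(p*q-1))*(p*q) + 1) ((m/(p*q-1)+1)*(p*q-1)) with hmin | hmin
      · exact min_eq_left hmin
      · exfalso
        rw [min_eq_right hmin] at hcm
        exact absurd hhigh (not_lt.mpr (le_of_lt hcm))
    rw [hc2] at hcm
    have hdown := TorusAux.mono_down (p:=p) (q:=q) (p':=p') (q':=q')
      m ((m/(p*q-1)+1)*(p*q-1) - m) ?_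
    · rw [show m + ((m/(p*q-1)+1)*(p*q-1) - m) = (m/(p*q-1)+1)*(p*q-1) by omega] at hdown
      exact le_trans (endpoint (m/(p*q-1)+1)) hdown
    · intro j hj1 hj2
      have hjlt : j < (m/(p*q-1)+1)*(p*q-1) := by omega
      have hjge : (m/(p*q-1))*(p*q-1) ≤ j := by
        have : (m/(p*q-1))*(p*q-1) ≤ m := hlow
        omega
      have hdiv := hdivj j hjge hjlt
      apply TorusAux.delta_nonpos hC
      rw [hdiv]
      have hjgt : (m/(p*q-1))*(p*q) < j := by omega
      exact_mod_cast hjgt
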